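/- Let G = (V, E) be a directed graph on a finite vertex set V with |V| = K, let π : V → ℝ be a probability distribution on V, and let c > 0 be a constant. Then Σ_{i∈V} π(i) / (c + π(i) + Σ_{j : (j→i)∈E} π(j)) ≤ 2·α(G)·log(1 + (⌈K²/c⌉ + K)/α(G)) + 2, where α(G) is the independence number of G and ⌈·⌉ is the ceiling function. -/

import Mathlib

open Finset

/-- `s` is an independent set of the directed graph with edge relation `E`:
for all distinct `i, j ∈ s`, neither `i → j` nor `j → i` is an edge. -/
def DirIsIndepSet {V : Type*} (E : V → V → Prop) (s : Finset V) : Prop :=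
  ∀ i ∈ s, ∀ j ∈ s, i ≠ j → ¬ E i j ∧ ¬ E j i

/-- The independence number of a directed graph: the maximum cardinality of an
independent set. -/
noncomputable def dirIndepNum (V : Type*) [Fintype V] (E : V → V → Prop) : ℕ :=
  sSup {n | ∃ s : Finset V, DirIsIndepSet E s ∧ s.card = n}

section Helpers

variable {V : Type*} [Fintype V] [DecidableEq V] (E : V → V → Prop) [DecidableRel E]

lemma caroWei (w : V → ℝ) :
    ∀ s : Finset V, (∀ i ∈ s, 0 < w i) →
    ∃ T : Finset V, T ⊆ s ∧ DirIsIndepSet E T ∧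
      ∑ i ∈ s, w i / (w i + ∑ j ∈ s.filter (fun j => j ≠ i ∧ (E i j ∨ E j i)), w j)
        ≤ (T.card : ℝ) := by
  intro s
  induction s using Finset.strongInduction with
  | _ s ih =>
    intro hw
    rcases s.eq_empty_or_nonempty with rfl | hne
    · exact ⟨∅, by simp, fun i hi => by simp at hi, by simp⟩
    · set D : V → ℝ := fun i => w i + ∑ j ∈ s.filter (fun j => j ≠ i ∧ (E i j ∨ E j i)), w j
        with hDdef
      obtain ⟨v, hv, hmin⟩ := s.exists_min_image D hne
      have hwnn : ∀ i ∈ s, 0 ≤ w i := fun i hi => (hw i hi).le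
      have hDpos : ∀ i ∈ s, 0 < D i := fun i hi =>
        add_pos_of_pos_of_nonneg (hw i hi)
          (sum_nonneg fun j hj => hwnn j (mem_of_mem_filter j hj))
      set Nv : Finset V := insert v (s.filter (fun j => j ≠ v ∧ (E v j ∨ E j v))) with hNv
      have hNvs : Nv ⊆ s := insert_subset hv (filter_subset _ _)
      set s' : Finset V := s \ Nv with hs'
      have hss : s' ⊂ s := by
        refine Finset.ssubset_iff_of_subset (sdiff_subset) |>.mpr ⟨v, hv, ?_⟩
        simp [hs', hNv]
      have hw' : ∀ i ∈ s', 0 < w i := fun i hi => hw i ((mem_sdiff.mp hi).1)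
      obtain ⟨T, hTs, hTind, hTsum⟩ := ih s' hss hw'
      have hvT : v ∉ T := fun h => by
        have := hTs h
        simp [hs', hNv] at this
      refine ⟨insert v T, insert_subset hv (hTs.trans sdiff_subset), ?_, ?_⟩
      · -- independence
        have key : ∀ j ∈ s', ¬ E v j ∧ ¬ E j v := by
          intro j hj
          rw [hs', mem_sdiff] at hj
          obtain ⟨hjs, hjN⟩ := hj
          rw [hNv, mem_insert, not_or, mem_filter] at hjN
          obtain ⟨hjv, hjf⟩ := hjN
          push_neg at hjf
          exact hjf hjs hjv
        intro i hi j hj hij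
        rcases mem_insert.mp hi with rfl | hiT
        · rcases mem_insert.mp hj with rfl | hjT
          · exact absurd rfl hij
          · exact key j (hTs hjT)
        · rcases mem_insert.mp hj with rfl | hjT
          · exact ⟨(key i (hTs hiT)).2, (key i (hTs hiT)).1⟩
          · exact hTind i hiT j hjT hij
      · -- the sum bound
        have hsplit : ∑ i ∈ s', (w i / D i) + ∑ i ∈ Nv, (w i / D i) = ∑ i ∈ s, w i / D i :=
          Finset.sum_sdiff hNvs
        have hDv : 0 < D v := hDpos v hv
        have hNvsum : ∑ i ∈ Nv, w i = D v := by
          rw [hNv, Finset.sum_insert (by simp)]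
        have hb1 : ∑ i ∈ Nv, w i / D i ≤ 1 := by
          have : ∑ i ∈ Nv, w i / D i ≤ ∑ i ∈ Nv, w i / D v := by
            refine Finset.sum_le_sum fun i hi => ?_
            exact div_le_div_of_nonneg_left (hwnn i (hNvs hi)) hDv (hmin i (hNvs hi)) |>.trans_eq rfl
          rw [← Finset.sum_div, hNvsum, div_self hDv.ne'] at this
          exact this
        have hb2 : ∑ i ∈ s', w i / D i ≤
            ∑ i ∈ s', w i / (w i + ∑ j ∈ s'.filter (fun j => j ≠ i ∧ (E i j ∨ E j i)), w j) := by
          refine Finset.sum_le_sum fun i hi => ?_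
          have his : i ∈ s := (mem_sdiff.mp hi).1
          refine div_le_div_of_nonneg_left (hwnn i his) ?_ ?_
          · exact add_pos_of_pos_of_nonneg (hw i his)
              (sum_nonneg fun j hj => hwnn j ((mem_sdiff.mp (mem_of_mem_filter j hj)).1))
          · refine add_le_add_right (Finset.sum_le_sum_of_subset_of_nonneg ?_ ?_) _
            · exact filter_subset_filter _ sdiff_subset
            · exact fun j hj _ => hwnn j (mem_of_mem_filter j hj)
        calc ∑ i ∈ s, w i / D i = ∑ i ∈ s', w i / D i + ∑ i ∈ Nv, w i / D i := hsplit.symm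
          _ ≤ (T.card : ℝ) + 1 := by
              refine add_le_add (hb2.trans hTsum) hb1
          _ = ((insert v T).card : ℝ) := by
              rw [Finset.card_insert_of_notMem hvT]; push_cast; ring

end Helpers

section Helpers2

variable {V : Type*} [Fintype V] [DecidableEq V] (E : V → V → Prop) [DecidableRel E]

lemma exists_good (a : ℝ) (ha : 0 < a)
    (hind : ∀ T : Finset V, DirIsIndepSet E T → (T.card : ℝ) ≤ a)
    (w : V → ℝ) (s : Finset V) (hne : s.Nonempty) (hw : ∀ i ∈ s, 1 ≤ w i) :
    ∃ i ∈ s, ((∑ j ∈ s, w j) + a) / (2 * a) ≤ w i + ∑ j ∈ s.filter (fun j => E j i), w j := by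
  classical
  have hw0 : ∀ i ∈ s, 0 < w i := fun i hi => lt_of_lt_of_le one_pos (hw i hi)
  have hwnn : ∀ i ∈ s, 0 ≤ w i := fun i hi => (hw0 i hi).le
  set Wm : V → ℝ := fun i => ∑ j ∈ s.filter (fun j => E j i), w j with hWm
  set Wp : V → ℝ := fun i => ∑ j ∈ s.filter (fun j => E i j), w j with hWp
  set b : V → ℝ := fun i => w i + ∑ j ∈ s.filter (fun j => j ≠ i ∧ (E i j ∨ E j i)), w j with hb
  have hbpos : ∀ i ∈ s, 0 < b i := fun i hi =>
    add_pos_of_pos_of_nonneg (hw0 i hi)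
      (sum_nonneg fun j hj => hwnn j (mem_of_mem_filter j hj))
  -- max of w i + Wm i
  obtain ⟨i₀, hi₀, hmax⟩ := s.exists_max_image (fun i => w i + Wm i) hne
  refine ⟨i₀, hi₀, ?_⟩
  set D : ℝ := w i₀ + Wm i₀ with hD
  set W : ℝ := ∑ j ∈ s, w j with hW
  have hWpos : 0 < W := by
    obtain ⟨x, hx⟩ := hne
    calc (0:ℝ) < 1 := one_pos
    _ ≤ w x := hw x hx
    _ ≤ W := Finset.single_le_sum hwnn hx
  -- Caro-Wei bound
  obtain ⟨T, _, hTind, hTsum⟩ := caroWei E w s hw0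
  have hcw : ∑ i ∈ s, w i / b i ≤ a := hTsum.trans (hind T hTind)
  -- Cauchy-Schwarz
  have hCS : W ^ 2 ≤ (∑ i ∈ s, w i / b i) * ∑ i ∈ s, w i * b i := by
    rw [hW]
    refine Finset.sum_sq_le_sum_mul_sum_of_sq_eq_mul s
      (fun i hi => div_nonneg (hwnn i hi) (hbpos i hi).le)
      (fun i hi => mul_nonneg (hwnn i hi) (hbpos i hi).le)
      (fun i hi => ?_)
    have hbne : b i ≠ 0 := (hbpos i hi).ne'
    field_simp
  -- bound on sum of w i * b i
  have hWmnn : ∀ i ∈ s, 0 ≤ Wm i := fun i hi =>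
    sum_nonneg fun j hj => hwnn j (mem_of_mem_filter j hj)
  have hstep1 : ∀ i ∈ s, b i ≤ w i + Wm i + Wp i := by
    intro i hi
    have hbi : b i = w i + ∑ j ∈ s.filter (fun j => j ≠ i ∧ (E i j ∨ E j i)), w j := rfl
    rw [hbi, add_assoc]
    refine add_le_add_right ?_ _
    have hsub : s.filter (fun j => j ≠ i ∧ (E i j ∨ E j i)) ⊆
        s.filter (fun j => E j i) ∪ s.filter (fun j => E i j) := by
      intro j hj
      rw [mem_filter] at hj
      rcases hj.2.2 with h | h
      · exact mem_union_right _ (mem_filter.mpr ⟨hj.1, h⟩)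
      · exact mem_union_left _ (mem_filter.mpr ⟨hj.1, h⟩)
    calc ∑ j ∈ s.filter (fun j => j ≠ i ∧ (E i j ∨ E j i)), w j
        ≤ ∑ j ∈ s.filter (fun j => E j i) ∪ s.filter (fun j => E i j), w j := by
          refine Finset.sum_le_sum_of_subset_of_nonneg hsub fun j hj _ => ?_
          rcases mem_union.mp hj with h | h <;> exact hwnn j (mem_of_mem_filter j h)
      _ ≤ Wm i + Wp i := by
          rw [← Finset.union_sdiff_self_eq_union, Finset.sum_union Finset.disjoint_sdiff]
          exact add_le_add_right (Finset.sum_le_sum_of_subset_of_nonneg Finset.sdiff_subset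
            fun j hj _ => hwnn j (mem_of_mem_filter j hj)) _
  have hswap : ∑ i ∈ s, w i * Wp i = ∑ i ∈ s, w i * Wm i := by
    have l1 : ∀ (i : V), i ∈ s → w i * Wp i = ∑ j ∈ s, if E i j then w i * w j else 0 := by
      intro i _
      rw [hWp, Finset.mul_sum, Finset.sum_filter]
    have l2 : ∀ (i : V), i ∈ s → w i * Wm i = ∑ j ∈ s, if E j i then w i * w j else 0 := by
      intro i _
      rw [hWm, Finset.mul_sum, Finset.sum_filter]
    rw [Finset.sum_congr rfl l1, Finset.sum_congr rfl l2, Finset.sum_comm]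
    exact Finset.sum_congr rfl fun j _ => Finset.sum_congr rfl fun i _ => by
      split <;> [skip; rfl]
      ring
  have hwb : ∑ i ∈ s, w i * b i ≤ 2 * W * D - W := by
    calc ∑ i ∈ s, w i * b i ≤ ∑ i ∈ s, w i * (w i + Wm i + Wp i) := by
          exact Finset.sum_le_sum fun i hi =>
            mul_le_mul_of_nonneg_left (hstep1 i hi) (hwnn i hi)
      _ = ∑ i ∈ s, w i * (w i + Wm i) + ∑ i ∈ s, w i * Wp i := by
          rw [← Finset.sum_add_distrib]
          exact Finset.sum_congr rfl fun i _ => by ring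
      _ = ∑ i ∈ s, w i * (w i + Wm i) + ∑ i ∈ s, w i * Wm i := by rw [hswap]
      _ ≤ ∑ i ∈ s, w i * D + ∑ i ∈ s, w i * (D - w i) := by
          refine add_le_add (Finset.sum_le_sum fun i hi =>
              mul_le_mul_of_nonneg_left (hmax i hi) (hwnn i hi))
            (Finset.sum_le_sum fun i hi =>
              mul_le_mul_of_nonneg_left ?_ (hwnn i hi))
          have := hmax i hi
          linarith
      _ = 2 * W * D - ∑ i ∈ s, w i * w i := by
          have h1 : ∑ i ∈ s, w i * D = W * D := by rw [← Finset.sum_mul, ← hW]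
          have h2 : ∑ i ∈ s, w i * (D - w i) = W * D - ∑ i ∈ s, w i * w i := by
            simp_rw [mul_sub]
            rw [Finset.sum_sub_distrib, ← Finset.sum_mul, ← hW]
          rw [h1, h2]; ring
      _ ≤ 2 * W * D - W := by
          rw [hW]
          have : ∑ j ∈ s, w j ≤ ∑ i ∈ s, w i * w i := by
            refine Finset.sum_le_sum fun i hi => ?_
            nlinarith [hw i hi]
          linarith
  have hwbnn : 0 ≤ ∑ i ∈ s, w i * b i :=
    sum_nonneg fun i hi => mul_nonneg (hwnn i hi) (hbpos i hi).le
  have hfinal : W ^ 2 ≤ a * (2 * W * D - W) := by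
    calc W ^ 2 ≤ (∑ i ∈ s, w i / b i) * ∑ i ∈ s, w i * b i := hCS
      _ ≤ a * ∑ i ∈ s, w i * b i := mul_le_mul_of_nonneg_right hcw hwbnn
      _ ≤ a * (2 * W * D - W) := mul_le_mul_of_nonneg_left hwb ha.le
  rw [div_le_iff₀ (by positivity)]
  nlinarith [hWpos, hfinal]

end Helpers2

section Helpers3

variable {V : Type*} [Fintype V] [DecidableEq V] (E : V → V → Prop) [DecidableRel E]

lemma greedyBound (a : ℝ) (ha : 0 < a)
    (hind : ∀ T : Finset V, DirIsIndepSet E T → (T.card : ℝ) ≤ a) (w : V → ℝ) :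
    ∀ s : Finset V, (∀ i ∈ s, 1 ≤ w i) →
      ∑ i ∈ s, w i / (w i + ∑ j ∈ s.filter (fun j => E j i), w j)
        ≤ 2 * a * Real.log (1 + (∑ i ∈ s, w i) / a) := by
  intro s
  induction s using Finset.strongInduction with
  | _ s ih =>
    intro hw
    rcases s.eq_empty_or_nonempty with rfl | hne
    · simp
    · have hwnn : ∀ i ∈ s, 0 ≤ w i := fun i hi => le_trans zero_le_one (hw i hi)
      set W : ℝ := ∑ i ∈ s, w i with hW
      have hWpos : 0 < W := by
        obtain ⟨x, hx⟩ := hne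
        calc (0:ℝ) < 1 := one_pos
        _ ≤ w x := hw x hx
        _ ≤ W := Finset.single_le_sum hwnn hx
      obtain ⟨i₀, hi₀, hD⟩ := exists_good E a ha hind w s hne hw
      set D : ℝ := w i₀ + ∑ j ∈ s.filter (fun j => E j i₀), w j with hDdef
      have hDpos : 0 < D :=
        add_pos_of_pos_of_nonneg (lt_of_lt_of_le one_pos (hw i₀ hi₀))
          (sum_nonneg fun j hj => hwnn j (mem_of_mem_filter j hj))
      set s' : Finset V := s.erase i₀ with hs'
      have hss : s' ⊂ s := Finset.erase_ssubset hi₀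
      have hw' : ∀ i ∈ s', 1 ≤ w i := fun i hi => hw i (Finset.mem_of_mem_erase hi)
      have hW' : ∑ i ∈ s', w i = W - w i₀ := by
        rw [hW, ← Finset.sum_erase_add s w hi₀]; ring
      have hsplit : ∑ i ∈ s, w i / (w i + ∑ j ∈ s.filter (fun j => E j i), w j)
          = (∑ i ∈ s', w i / (w i + ∑ j ∈ s.filter (fun j => E j i), w j)) + w i₀ / D := by
        rw [Finset.sum_erase_add s _ hi₀]
      -- first term bound
      have hterm : w i₀ / D ≤ 2 * a * (w i₀ / (W + a)) := by
        have h1 : w i₀ / D ≤ w i₀ / ((W + a) / (2 * a)) := by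
          refine div_le_div_of_nonneg_left (hwnn i₀ hi₀) ?_ hD
          positivity
        calc w i₀ / D ≤ w i₀ / ((W + a) / (2 * a)) := h1
          _ = 2 * a * (w i₀ / (W + a)) := by
            field_simp
      -- tail bound
      have htail : ∑ i ∈ s', w i / (w i + ∑ j ∈ s.filter (fun j => E j i), w j)
          ≤ 2 * a * Real.log (1 + (W - w i₀) / a) := by
        calc ∑ i ∈ s', w i / (w i + ∑ j ∈ s.filter (fun j => E j i), w j)
            ≤ ∑ i ∈ s', w i / (w i + ∑ j ∈ s'.filter (fun j => E j i), w j) := by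
              refine Finset.sum_le_sum fun i hi => ?_
              have his : i ∈ s := Finset.mem_of_mem_erase hi
              refine div_le_div_of_nonneg_left (hwnn i his) ?_ ?_
              · exact add_pos_of_pos_of_nonneg (lt_of_lt_of_le one_pos (hw i his))
                  (sum_nonneg fun j hj => hwnn j (Finset.mem_of_mem_erase (mem_of_mem_filter j hj)))
              · refine add_le_add_right (Finset.sum_le_sum_of_subset_of_nonneg
                  (filter_subset_filter _ (Finset.erase_subset _ _))
                  fun j hj _ => hwnn j (mem_of_mem_filter j hj)) _
          _ ≤ 2 * a * Real.log (1 + (∑ i ∈ s', w i) / a) := ih s' hss hw'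
          _ = 2 * a * Real.log (1 + (W - w i₀) / a) := by rw [hW']
      -- key logarithmic inequality
      have hw₀ : 1 ≤ w i₀ := hw i₀ hi₀
      have hw₀W : w i₀ ≤ W := Finset.single_le_sum hwnn hi₀
      have hkey : w i₀ / (W + a) + Real.log (1 + (W - w i₀) / a)
          ≤ Real.log (1 + W / a) := by
        have e1 : Real.log (1 + (W - w i₀) / a) = Real.log (a + (W - w i₀)) - Real.log a := by
          rw [← Real.log_div (by linarith) ha.ne']
          congr 1
          field_simp
        have e2 : Real.log (1 + W / a) = Real.log (a + W) - Real.log a := by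
          rw [← Real.log_div (by positivity) ha.ne']
          congr 1
          field_simp
        rw [e1, e2]
        have hlog : Real.log (a + (W - w i₀)) - Real.log (a + W) ≤ - (w i₀ / (W + a)) := by
          have hx : (0:ℝ) < (a + (W - w i₀)) / (a + W) := by
            have h1 : (0:ℝ) < a + (W - w i₀) := by linarith
            have h2 : (0:ℝ) < a + W := by linarith
            positivity
          have := Real.log_le_sub_one_of_pos hx
          rw [Real.log_div (by linarith) (by positivity)] at this
          have heq : (a + (W - w i₀)) / (a + W) - 1 = - (w i₀ / (W + a)) := by
            have h4 : a + W ≠ 0 := by positivity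
            rw [div_sub_one h4, neg_div', add_comm W a]
            congr 1
            ring
          linarith
        linarith
      calc ∑ i ∈ s, w i / (w i + ∑ j ∈ s.filter (fun j => E j i), w j)
          = (∑ i ∈ s', w i / (w i + ∑ j ∈ s.filter (fun j => E j i), w j)) + w i₀ / D := hsplit
        _ ≤ 2 * a * Real.log (1 + (W - w i₀) / a) + 2 * a * (w i₀ / (W + a)) :=
            add_le_add htail hterm
        _ = 2 * a * (w i₀ / (W + a) + Real.log (1 + (W - w i₀) / a)) := by ring
        _ ≤ 2 * a * Real.log (1 + W / a) := by
            refine mul_le_mul_of_nonneg_left hkey (by positivity)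

end Helpers3

set_option maxHeartbeats 1000000 in
theorem stmt2 {V : Type*} [Fintype V] (E : V → V → Prop) [DecidableRel E]
    (K : ℕ) (hK : Fintype.card V = K)
    (π : V → ℝ) (hnn : ∀ i, 0 ≤ π i) (hsum : ∑ i, π i = 1)
    (c : ℝ) (hc : 0 < c) :
    ∑ i, π i / (c + π i + ∑ j ∈ univ.filter (fun j => E j i), π j)
      ≤ 2 * (dirIndepNum V E : ℝ) *
          Real.log (1 + ((⌈(K : ℝ) ^ 2 / c⌉ : ℝ) + K) / (dirIndepNum V E : ℝ)) + 2 := by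
  classical
  have hbdd : BddAbove {n | ∃ s : Finset V, DirIsIndepSet E s ∧ s.card = n} := by
    refine ⟨Fintype.card V, fun n hn => ?_⟩
    obtain ⟨s, _, rfl⟩ := hn
    exact s.card_le_univ
  have hcard : ∀ T : Finset V, DirIsIndepSet E T → T.card ≤ dirIndepNum V E :=
    fun T hT => le_csSup hbdd ⟨T, hT, rfl⟩
  have hceil : (0:ℝ) ≤ ((⌈(K : ℝ) ^ 2 / c⌉ : ℤ) : ℝ) := by
    exact_mod_cast Int.ceil_nonneg (by positivity : (0:ℝ) ≤ (K : ℝ) ^ 2 / c)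
  have hlognn : 0 ≤ Real.log (1 + ((⌈(K : ℝ) ^ 2 / c⌉ : ℝ) + K) / (dirIndepNum V E : ℝ)) := by
    refine Real.log_nonneg ?_
    have : (0:ℝ) ≤ ((⌈(K : ℝ) ^ 2 / c⌉ : ℝ) + K) / (dirIndepNum V E : ℝ) :=
      div_nonneg (by positivity) (by positivity)
    linarith
  have hRHSnn : 0 ≤ 2 * (dirIndepNum V E : ℝ) *
      Real.log (1 + ((⌈(K : ℝ) ^ 2 / c⌉ : ℝ) + K) / (dirIndepNum V E : ℝ)) :=
    mul_nonneg (by positivity) hlognn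
  have hden : ∀ i : V, 0 < c + π i + ∑ j ∈ univ.filter (fun j => E j i), π j := by
    intro i
    have h1 : 0 ≤ ∑ j ∈ univ.filter (fun j => E j i), π j := sum_nonneg fun j _ => hnn j
    have := hnn i
    linarith
  by_cases hK2 : K < 2
  · -- trivial case: LHS ≤ K ≤ 1 ≤ 2 ≤ RHS
    have hLHS : ∑ i, π i / (c + π i + ∑ j ∈ univ.filter (fun j => E j i), π j) ≤ (K:ℝ) := by
      calc ∑ i, π i / (c + π i + ∑ j ∈ univ.filter (fun j => E j i), π j)
          ≤ ∑ _i : V, (1:ℝ) := by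
            refine Finset.sum_le_sum fun i _ => ?_
            rw [div_le_one (hden i)]
            have h1 : 0 ≤ ∑ j ∈ univ.filter (fun j => E j i), π j :=
              sum_nonneg fun j _ => hnn j
            linarith
        _ = (K:ℝ) := by
            rw [Finset.sum_const, Finset.card_univ, hK, nsmul_eq_mul, mul_one]
    have hK1 : (K:ℝ) ≤ 1 := by exact_mod_cast Nat.lt_succ_iff.mp (by omega : K < 2)
    linarith
  · push_neg at hK2
    have hKpos : 0 < Fintype.card V := by omega
    have hne : Nonempty V := Fintype.card_pos_iff.mp hKpos
    have hα1 : 1 ≤ dirIndepNum V E := by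
      obtain ⟨v⟩ := hne
      have hind : DirIsIndepSet E ({v} : Finset V) := by
        intro i hi j hj hij
        simp only [mem_singleton] at hi hj
        exact absurd (hi.trans hj.symm) hij
      have := hcard {v} hind
      simpa using this
    set a : ℝ := (dirIndepNum V E : ℝ) with haa
    have ha : 0 < a := by
      rw [haa]
      exact_mod_cast Nat.lt_of_lt_of_le Nat.zero_lt_one hα1
    have hinda : ∀ T : Finset V, DirIsIndepSet E T → (T.card : ℝ) ≤ a := by
      intro T hT
      rw [haa]
      exact_mod_cast hcard T hT
    have hKR : (2:ℝ) ≤ (K:ℝ) := by exact_mod_cast hK2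
    set M : ℤ := ⌈(K : ℝ) ^ 2 / c⌉ with hM
    have hM1 : (1:ℝ) ≤ (M:ℝ) := by
      have : (0:ℤ) < M := Int.ceil_pos.mpr (div_pos (by positivity) hc)
      exact_mod_cast this
    have hMc : (K:ℝ)^2 ≤ (M:ℝ) * c := by
      have h := Int.le_ceil ((K : ℝ) ^ 2 / c)
      rw [div_le_iff₀ hc] at h
      exact h
    set w : V → ℝ := fun i => ((⌈π i * (M:ℝ)⌉ : ℤ) : ℝ) with hwdef
    set s : Finset V := univ.filter (fun i => 0 < π i) with hsdef
    have hw1 : ∀ i ∈ s, 1 ≤ w i := by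
      intro i hi
      rw [hsdef, mem_filter] at hi
      have : (0:ℤ) < ⌈π i * (M:ℝ)⌉ :=
        Int.ceil_pos.mpr (mul_pos hi.2 (by linarith))
      show (1:ℝ) ≤ ((⌈π i * (M:ℝ)⌉ : ℤ) : ℝ)
      exact_mod_cast this
    have hwnn : ∀ i ∈ s, 0 ≤ w i := fun i hi => le_trans zero_le_one (hw1 i hi)
    have hwge : ∀ i, π i * (M:ℝ) ≤ w i := fun i => Int.le_ceil _
    have hwle : ∀ i, w i ≤ π i * (M:ℝ) + 1 := fun i => le_of_lt (Int.ceil_lt_add_one _)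
    -- restrict sum to support
    have hzero : ∀ i ∈ (univ : Finset V), i ∉ s →
        π i / (c + π i + ∑ j ∈ univ.filter (fun j => E j i), π j) = 0 := by
      intro i _ hi
      rw [hsdef, mem_filter] at hi
      push_neg at hi
      have : π i = 0 := le_antisymm (hi (mem_univ i)) (hnn i)
      rw [this, zero_div]
    rw [← Finset.sum_subset (subset_univ s) hzero]
    -- per-term bound
    have hterm : ∀ i ∈ s, π i / (c + π i + ∑ j ∈ univ.filter (fun j => E j i), π j)
        ≤ w i / (w i + ∑ j ∈ s.filter (fun j => E j i), w j) := by
      intro i hi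
      have hWs : 0 ≤ ∑ j ∈ s.filter (fun j => E j i), w j :=
        sum_nonneg fun j hj => hwnn j (mem_of_mem_filter j hj)
      have hdw : 0 < w i + ∑ j ∈ s.filter (fun j => E j i), w j := by
        have := hw1 i hi; linarith
      rw [div_le_div_iff₀ (hden i) hdw]
      have hPs : ∑ j ∈ s.filter (fun j => E j i), π j
          ≤ ∑ j ∈ univ.filter (fun j => E j i), π j := by
        refine Finset.sum_le_sum_of_subset_of_nonneg
          (filter_subset_filter _ (subset_univ s)) fun j _ _ => hnn j
      have hcount : (1:ℝ) + (s.filter (fun j => E j i)).card ≤ (K:ℝ)^2 := by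
        have h1 : ((s.filter (fun j => E j i)).card : ℝ) ≤ (K:ℝ) := by
          have := Finset.card_le_univ (s.filter (fun j => E j i))
          rw [hK] at this
          exact_mod_cast this
        nlinarith
      have hkey : w i + ∑ j ∈ s.filter (fun j => E j i), w j
          ≤ (M:ℝ) * (c + π i + ∑ j ∈ univ.filter (fun j => E j i), π j) := by
        calc w i + ∑ j ∈ s.filter (fun j => E j i), w j
            ≤ (π i * (M:ℝ) + 1) + ∑ j ∈ s.filter (fun j => E j i), (π j * (M:ℝ) + 1) := by
              exact add_le_add (hwle i) (Finset.sum_le_sum fun j _ => hwle j)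
          _ = (M:ℝ) * (π i + ∑ j ∈ s.filter (fun j => E j i), π j)
              + (1 + (s.filter (fun j => E j i)).card) := by
              rw [Finset.sum_add_distrib, Finset.sum_const, ← Finset.sum_mul]
              push_cast
              ring
          _ ≤ (M:ℝ) * (π i + ∑ j ∈ univ.filter (fun j => E j i), π j) + (K:ℝ)^2 := by
              refine add_le_add (mul_le_mul_of_nonneg_left (by linarith) (by linarith)) hcount
          _ ≤ (M:ℝ) * (π i + ∑ j ∈ univ.filter (fun j => E j i), π j) + (M:ℝ) * c := by
              linarith [hMc]
          _ = (M:ℝ) * (c + π i + ∑ j ∈ univ.filter (fun j => E j i), π j) := by ring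
      calc π i * (w i + ∑ j ∈ s.filter (fun j => E j i), w j)
          ≤ π i * ((M:ℝ) * (c + π i + ∑ j ∈ univ.filter (fun j => E j i), π j)) :=
            mul_le_mul_of_nonneg_left hkey (hnn i)
        _ = (π i * (M:ℝ)) * (c + π i + ∑ j ∈ univ.filter (fun j => E j i), π j) := by ring
        _ ≤ w i * (c + π i + ∑ j ∈ univ.filter (fun j => E j i), π j) :=
            mul_le_mul_of_nonneg_right (hwge i) (hden i).le
    -- total weight bound
    have hWtot : ∑ i ∈ s, w i ≤ (M:ℝ) + (K:ℝ) := by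
      calc ∑ i ∈ s, w i ≤ ∑ i ∈ s, (π i * (M:ℝ) + 1) :=
            Finset.sum_le_sum fun i _ => hwle i
        _ = (M:ℝ) * (∑ i ∈ s, π i) + (s.card : ℝ) := by
            rw [Finset.sum_add_distrib, Finset.sum_const, ← Finset.sum_mul]
            push_cast
            ring
        _ ≤ (M:ℝ) * 1 + (K:ℝ) := by
            refine add_le_add (mul_le_mul_of_nonneg_left ?_ (by linarith)) ?_
            · rw [← hsum]
              exact Finset.sum_le_sum_of_subset_of_nonneg (subset_univ s) fun i _ _ => hnn i
            · have := Finset.card_le_univ s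
              rw [hK] at this
              exact_mod_cast this
        _ = (M:ℝ) + (K:ℝ) := by ring
    have hWnn : 0 ≤ ∑ i ∈ s, w i := sum_nonneg hwnn
    calc ∑ i ∈ s, π i / (c + π i + ∑ j ∈ univ.filter (fun j => E j i), π j)
        ≤ ∑ i ∈ s, w i / (w i + ∑ j ∈ s.filter (fun j => E j i), w j) :=
          Finset.sum_le_sum hterm
      _ ≤ 2 * a * Real.log (1 + (∑ i ∈ s, w i) / a) := greedyBound E a ha hinda w s hw1
      _ ≤ 2 * a * Real.log (1 + ((M:ℝ) + (K:ℝ)) / a) := by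
          refine mul_le_mul_of_nonneg_left ?_ (by positivity)
          refine Real.log_le_log (by positivity) ?_
          have : (∑ i ∈ s, w i) / a ≤ ((M:ℝ) + (K:ℝ)) / a := by gcongr
          linarith
      _ ≤ 2 * a * Real.log (1 + ((M:ℝ) + (K:ℝ)) / a) + 2 := by linarith
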